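/- Let w ∈ ℝⁿ have strictly positive entries and let F₀,…,F_{J+1} be n×n real matrices forming a frame with bounds 0 < c ≤ C, i.e., c‖x‖_w² ≤ Σ_{j=0}^{J+1} ‖F_j x‖_w² ≤ C‖x‖_w² for all x ∈ ℝⁿ. Then for every m ≥ 1 and all x ∈ ℝⁿ: c^m ‖x‖_w² ≤ Σ over all tuples (j₁,k₁,…,j_m,k_m) with jᵢ ∈ {0,…,J+1}, kᵢ ∈ {1,2} of ‖B[j₁,k₁,…,j_m,k_m](x)‖_w² ≤ C^m ‖x‖_w². In particular, if c = C = 1 then this sum equals ‖x‖_w² exactly (conservation of energy in each layer). -/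
import Mathlib


open Matrix

/-- The weighted squared norm `‖x‖_w² = Σᵢ wᵢ² xᵢ²`. -/
noncomputable def wnorm2 {n : ℕ} (w x : Fin n → ℝ) : ℝ := ∑ i, (w i) ^ 2 * (x i) ^ 2

/-- The two activations: `act 0 = σ₁` is the entrywise ReLU and `act 1 = σ₂` is the
entrywise reflected ReLU. -/
def act {n : ℕ} (k : Fin 2) (x : Fin n → ℝ) : Fin n → ℝ :=
  if k = 0 then (fun i => max (x i) 0) else (fun i => max (-(x i)) 0)

/-- The BLIS coefficient `B[j₁,k₁,…,j_m,k_m](x) = σ_{k_m}(F_{j_m} ⋯ σ_{k_1}(F_{j_1} x) ⋯)`,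
where `js i = j_{i+1}` and `ks i = k_{i+1}`. -/
noncomputable def blis {n N : ℕ} (F : Fin N → Matrix (Fin n) (Fin n) ℝ) :
    (m : ℕ) → (Fin m → Fin N) → (Fin m → Fin 2) → (Fin n → ℝ) → Fin n → ℝ
  | 0, _, _, x => x
  | m + 1, js, ks, x =>
      act (ks (Fin.last m)) ((F (js (Fin.last m))) *ᵥ blis F m (Fin.init js) (Fin.init ks) x)

lemma act_energy {n : ℕ} (w : Fin n → ℝ) (y : Fin n → ℝ) :
    ∑ k : Fin 2, wnorm2 w (act k y) = wnorm2 w y := by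
  simp only [wnorm2, Fin.sum_univ_two, act]
  rw [← Finset.sum_add_distrib]
  refine Finset.sum_congr rfl fun i _ => ?_
  simp only [Fin.isValue, if_true, one_ne_zero, if_false]
  rw [← mul_add]
  congr 1
  rcases le_total (y i) 0 with h | h
  · rw [max_eq_right h, max_eq_left (by linarith)]; ring
  · rw [max_eq_left h, max_eq_right (by linarith)]; ring

lemma sum_snoc {M : Type*} [AddCommMonoid M] {m : ℕ} {A : Type*} [Fintype A] [DecidableEq A]
    (g : (Fin (m + 1) → A) → M) :
    ∑ f : Fin (m + 1) → A, g f = ∑ f : Fin m → A, ∑ a : A, g (Fin.snoc f a) := by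
  rw [← Equiv.sum_comp (Fin.snocEquiv (fun _ => A)) g, Fintype.sum_prod_type, Finset.sum_comm]
  rfl

theorem blis_energy_bounds {n J : ℕ} (w : Fin n → ℝ) (hw : ∀ i, 0 < w i)
    (F : Fin (J + 2) → Matrix (Fin n) (Fin n) ℝ) (c C : ℝ) (hc : 0 < c) (hcC : c ≤ C)
    (hframe : ∀ x : Fin n → ℝ,
      c * wnorm2 w x ≤ ∑ j, wnorm2 w ((F j) *ᵥ x) ∧
      ∑ j, wnorm2 w ((F j) *ᵥ x) ≤ C * wnorm2 w x) :
    ∀ m : ℕ, 1 ≤ m → ∀ x : Fin n → ℝ,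
      (c ^ m * wnorm2 w x ≤
        (∑ js : Fin m → Fin (J + 2), ∑ ks : Fin m → Fin 2,
          wnorm2 w (blis F m js ks x)) ∧
      (∑ js : Fin m → Fin (J + 2), ∑ ks : Fin m → Fin 2,
          wnorm2 w (blis F m js ks x)) ≤ C ^ m * wnorm2 w x) ∧
      (c = 1 ∧ C = 1 →
        (∑ js : Fin m → Fin (J + 2), ∑ ks : Fin m → Fin 2,
          wnorm2 w (blis F m js ks x)) = wnorm2 w x) := by
  have key : ∀ m : ℕ, ∀ x : Fin n → ℝ,
      c ^ m * wnorm2 w x ≤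
        (∑ js : Fin m → Fin (J + 2), ∑ ks : Fin m → Fin 2,
          wnorm2 w (blis F m js ks x)) ∧
      (∑ js : Fin m → Fin (J + 2), ∑ ks : Fin m → Fin 2,
          wnorm2 w (blis F m js ks x)) ≤ C ^ m * wnorm2 w x := by
    intro m
    induction m with
    | zero => intro x; simp [blis]
    | succ m ih =>
      intro x
      have step : (∑ js : Fin (m+1) → Fin (J + 2), ∑ ks : Fin (m+1) → Fin 2,
          wnorm2 w (blis F (m+1) js ks x)) =
          ∑ js : Fin m → Fin (J + 2), ∑ ks : Fin m → Fin 2,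
            ∑ j : Fin (J+2), wnorm2 w ((F j) *ᵥ blis F m js ks x) := by
        rw [sum_snoc (g := fun js => ∑ ks : Fin (m+1) → Fin 2, wnorm2 w (blis F (m+1) js ks x))]
        refine Finset.sum_congr rfl fun js _ => ?_
        conv_rhs => rw [Finset.sum_comm]
        refine Finset.sum_congr rfl fun j _ => ?_
        rw [sum_snoc (g := fun ks => wnorm2 w (blis F (m+1) (Fin.snoc js j) ks x))]
        refine Finset.sum_congr rfl fun ks _ => ?_
        have : ∀ k : Fin 2, blis F (m+1) (Fin.snoc js j) (Fin.snoc ks k) x =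
            act k ((F j) *ᵥ blis F m js ks x) := by
          intro k
          simp [blis, Fin.snoc_last, Fin.init_snoc]
        simp_rw [this]
        exact act_energy w _
      rw [step]
      set b := fun (js : Fin m → Fin (J+2)) (ks : Fin m → Fin 2) => blis F m js ks x with hb
      have hlow : ∀ js ks, c * wnorm2 w (b js ks) ≤
          ∑ j : Fin (J+2), wnorm2 w ((F j) *ᵥ b js ks) := fun js ks => (hframe _).1
      have hhigh : ∀ js ks, (∑ j : Fin (J+2), wnorm2 w ((F j) *ᵥ b js ks)) ≤
          C * wnorm2 w (b js ks) := fun js ks => (hframe _).2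
      constructor
      · calc c ^ (m+1) * wnorm2 w x = c * (c ^ m * wnorm2 w x) := by ring
          _ ≤ c * ∑ js, ∑ ks, wnorm2 w (b js ks) :=
              mul_le_mul_of_nonneg_left (ih x).1 hc.le
          _ = ∑ js, ∑ ks, c * wnorm2 w (b js ks) := by
              simp_rw [Finset.mul_sum]
          _ ≤ _ := by
              exact Finset.sum_le_sum fun js _ => Finset.sum_le_sum fun ks _ => hlow js ks
      · calc (∑ js : Fin m → Fin (J + 2), ∑ ks : Fin m → Fin 2,
              ∑ j : Fin (J+2), wnorm2 w ((F j) *ᵥ b js ks))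
            ≤ ∑ js, ∑ ks, C * wnorm2 w (b js ks) :=
              Finset.sum_le_sum fun js _ => Finset.sum_le_sum fun ks _ => hhigh js ks
          _ = C * ∑ js, ∑ ks, wnorm2 w (b js ks) := by simp_rw [Finset.mul_sum]
          _ ≤ C * (C ^ m * wnorm2 w x) :=
              mul_le_mul_of_nonneg_left (ih x).2 (hc.trans_le hcC).le
          _ = C ^ (m+1) * wnorm2 w x := by ring
  intro m _ x
  refine ⟨key m x, fun ⟨h1, h2⟩ => ?_⟩
  have := key m x
  rw [h1, h2] at this
  simp only [one_pow, one_mul] at this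
  exact le_antisymm this.2 this.1
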